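/- arXiv:2309.16791 — 6 statements merged into one kernel-verified Lean document; each statement's English description precedes it below -/
import Mathlib

section
/- Let H be a δ-hyperbolic geodesic metric space. For any two closed balls B̄(c₁, r₁) and B̄(c₂, r₂) in H, the diameter of their intersection satisfies diam(B̄(c₁,r₁) ∩ B̄(c₂,r₂)) ≤ r₁ + r₂ − d(c₁, c₂) + 2δ. -/
/-- The Gromov product `⟨x,y⟩_w`. -/
noncomputable def gromovProd {H : Type*} [MetricSpace H] (w x y : H) : ℝ :=
  (dist x w + dist y w - dist x y) / 2

/-- `f` is a unit-speed geodesic parametrization of a segment from `x` to `y`. -/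
def IsGeodesicParam {H : Type*} [MetricSpace H] (x y : H) (f : ℝ → H) : Prop :=
  f 0 = x ∧ f (dist x y) = y ∧
    ∀ s ∈ Set.Icc (0:ℝ) (dist x y), ∀ t ∈ Set.Icc (0:ℝ) (dist x y),
      dist (f s) (f t) = |s - t|

/-- A geodesic metric space: any two points are joined by a geodesic segment. -/
def IsGeodesicSpace (H : Type*) [MetricSpace H] : Prop :=
  ∀ x y : H, ∃ f : ℝ → H, IsGeodesicParam x y f

/-- All geodesic triangles are `δ`-thin. -/
def ThinTriangles (H : Type*) [MetricSpace H] (δ : ℝ) : Prop :=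
  ∀ (r p q : H) (fp fq : ℝ → H), IsGeodesicParam r p fp → IsGeodesicParam r q fq →
    ∀ t ∈ Set.Icc (0:ℝ) (gromovProd r p q), dist (fp t) (fq t) ≤ δ

/-- A `δ`-hyperbolic geodesic metric space. -/
def IsDeltaHyperbolic (H : Type*) [MetricSpace H] (δ : ℝ) : Prop :=
  IsGeodesicSpace H ∧ ThinTriangles H δ ∧
    ∀ w x y z : H, min (gromovProd w x y) (gromovProd w y z) - δ ≤ gromovProd w x z

/-- The radius of a bounded subset `X`: the infimum of radii of closed balls containing
`X`. -/
noncomputable def setRadius {H : Type*} [MetricSpace H] (X : Set H) : ℝ :=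
  sInf {r : ℝ | ∃ c, X ⊆ Metric.closedBall c r}

/-- Lemma 2.5: in a `δ`-hyperbolic geodesic space, the diameter of the intersection of two
closed balls `B̄(c₁,r₁)` and `B̄(c₂,r₂)` is at most `r₁ + r₂ − d(c₁,c₂) + 2δ`. -/
theorem diam_inter_closedBalls {H : Type} [MetricSpace H] (δ : ℝ)
    (hhyp : IsDeltaHyperbolic H δ) (c₁ c₂ : H) (r₁ r₂ : ℝ) :
    ∀ x ∈ Metric.closedBall c₁ r₁ ∩ Metric.closedBall c₂ r₂,
      ∀ y ∈ Metric.closedBall c₁ r₁ ∩ Metric.closedBall c₂ r₂,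
        dist x y ≤ r₁ + r₂ - dist c₁ c₂ + 2 * δ := by
  intro x hx y hy
  have h := hhyp.2.2 x c₁ y c₂
  simp only [gromovProd] at h
  have hx1 : dist x c₁ ≤ r₁ := hx.1
  have hx2 : dist x c₂ ≤ r₂ := hx.2
  have hy1 : dist y c₁ ≤ r₁ := hy.1
  have hy2 : dist y c₂ ≤ r₂ := hy.2
  have e1 : dist c₁ x = dist x c₁ := dist_comm _ _
  have e2 : dist c₂ x = dist x c₂ := dist_comm _ _
  have e3 : dist y x = dist x y := dist_comm _ _
  have e4 : dist c₁ y = dist y c₁ := dist_comm _ _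
  rcases min_cases ((dist c₁ x + dist y x - dist c₁ y) / 2)
      ((dist y x + dist c₂ x - dist y c₂) / 2) with ⟨he, _⟩ | ⟨he, _⟩ <;>
    rw [he] at h <;> linarith
end

section
/- Let H be a δ-hyperbolic geodesic metric space, X a finite nonempty subset of H, and a, b ∈ X points with d(a,b) = diam(X). Let m be the midpoint of a geodesic segment from a to b. Then X ⊆ B̄(m, d(a,b)/2 + δ); in particular m is a δ-center of X and d(a,b)/2 ≤ r(X) ≤ d(a,b)/2 + δ. -/
private lemma key_half {H : Type} [MetricSpace H] (δ : ℝ)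
    (hhyp : IsDeltaHyperbolic H δ) (a b p : H)
    (hpa : dist p a ≤ dist a b) (hpb : dist p b ≤ dist p a)
    (f : ℝ → H) (hf : IsGeodesicParam a b f) :
    dist p (f (dist a b / 2)) ≤ dist a b / 2 + δ := by
  obtain ⟨g, hg⟩ := hhyp.1 a p
  set t := dist a b / 2 with htdef
  have ht0 : (0:ℝ) ≤ t := by positivity
  have hba : dist b a = dist a b := dist_comm b a
  have htprod : t ≤ gromovProd a p b := by
    unfold gromovProd; rw [hba]; linarith
  have hthin := hhyp.2.1 a p b g f hg hf t ⟨ht0, htprod⟩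
  have htap : t ≤ dist a p := by
    have h1 : gromovProd a p b ≤ dist p a := by
      have := dist_triangle b p a
      unfold gromovProd; rw [hba]; linarith [dist_comm b p]
    rw [dist_comm a p]; linarith
  have hgt : dist (g t) p = dist a p - t := by
    have := hg.2.2 t ⟨ht0, htap⟩ (dist a p) ⟨dist_nonneg, le_refl _⟩
    rw [hg.2.1] at this
    rw [this, abs_of_nonpos (by linarith)]; ring
  have : dist p (f t) ≤ dist p (g t) + dist (g t) (f t) := dist_triangle _ _ _
  rw [dist_comm p (g t)] at this
  have hap : dist a p ≤ dist a b := by rw [dist_comm a p]; exact hpa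
  have : dist p (f t) ≤ dist a p - t + δ := by linarith
  linarith

/-- Lemma 2.2 (diameter vs radius): if `[a,b]` is a diameter-realizing segment of a finite
set `X` with midpoint `m`, then `X ⊆ B̄(m, d(a,b)/2 + δ)`; in particular `m` is a
`δ`-center of `X` and `d(a,b)/2 ≤ r(X) ≤ d(a,b)/2 + δ`. -/
theorem diam_vs_radius {H : Type} [MetricSpace H] (δ : ℝ)
    (hhyp : IsDeltaHyperbolic H δ)
    (X : Finset H) (hX : X.Nonempty) (a b : H) (ha : a ∈ X) (hb : b ∈ X)
    (hdiam : ∀ p ∈ X, ∀ q ∈ X, dist p q ≤ dist a b)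
    (f : ℝ → H) (hf : IsGeodesicParam a b f) (m : H) (hm : m = f (dist a b / 2)) :
    (∀ p ∈ X, dist p m ≤ dist a b / 2 + δ) ∧
    (∀ p ∈ X, dist p m ≤ setRadius (X : Set H) + δ) ∧
    dist a b / 2 ≤ setRadius (X : Set H) ∧
    setRadius (X : Set H) ≤ dist a b / 2 + δ := by

  have hba : dist b a = dist a b := dist_comm b a
  have part1 : ∀ p ∈ X, dist p m ≤ dist a b / 2 + δ := by
    intro p hp
    rcases le_total (dist p b) (dist p a) with hc | hc
    · rw [hm]
      exact key_half δ hhyp a b p (hdiam p hp a ha) hc f hf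
    · have hf' : IsGeodesicParam b a (fun s => f (dist a b - s)) := by
        obtain ⟨h0, h1, h2⟩ := hf
        refine ⟨by simpa using h1, by rw [hba]; simpa using h0, ?_⟩
        intro s hs t ht
        rw [hba] at hs ht
        have := h2 (dist a b - s) ⟨by linarith [hs.2], by linarith [hs.1]⟩
          (dist a b - t) ⟨by linarith [ht.2], by linarith [ht.1]⟩
        rw [this, abs_sub_comm]
        congr 1; ring
      have hm' : m = (fun s => f (dist a b - s)) (dist b a / 2) := by
        rw [hm, hba]; congr 1; ring
      have := key_half δ hhyp b a p
        (by rw [hba]; exact hdiam p hp b hb) hc _ hf'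
      have harg : dist a b - dist b a / 2 = dist a b / 2 := by rw [hba]; ring
      rw [harg, ← hm, hba] at this
      exact this
  have hlb : ∀ r ∈ {r : ℝ | ∃ c, (X : Set H) ⊆ Metric.closedBall c r},
      dist a b / 2 ≤ r := by
    rintro r ⟨c, hc⟩
    have h1 : dist a c ≤ r := hc ha
    have h2 : dist b c ≤ r := hc hb
    have := dist_triangle a c b
    rw [dist_comm c b] at this
    linarith [dist_comm b c]
  have hmem : (dist a b / 2 + δ) ∈
      {r : ℝ | ∃ c, (X : Set H) ⊆ Metric.closedBall c r} := by
    exact ⟨m, fun p hp => Metric.mem_closedBall.mpr (part1 p hp)⟩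
  have hbdd : BddBelow {r : ℝ | ∃ c, (X : Set H) ⊆ Metric.closedBall c r} :=
    ⟨dist a b / 2, fun r hr => hlb r hr⟩
  have part3 : dist a b / 2 ≤ setRadius (X : Set H) :=
    le_csInf ⟨_, hmem⟩ hlb
  have part4 : setRadius (X : Set H) ≤ dist a b / 2 + δ := csInf_le hbdd hmem
  exact ⟨part1, fun p hp => le_trans (part1 p hp) (by linarith), part3, part4⟩
end

section
/- Let H be a δ-hyperbolic geodesic metric space, X a finite nonempty subset of H, and a, b ∈ X points with d(a,b) = diam(X). Let m be the midpoint of a geodesic segment from a to b, and let c be an ε-center of X for some ε > 0. Then d(c, m) ≤ ε + 2δ. -/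
/-- Reversal of a geodesic parametrization. -/
lemma isGeodesicParam_rev {H : Type} [MetricSpace H] (a b : H) (f : ℝ → H)
    (hf : IsGeodesicParam a b f) :
    IsGeodesicParam b a (fun t => f (dist a b - t)) := by
  obtain ⟨h0, h1, h2⟩ := hf
  refine ⟨by simpa using h1, ?_, ?_⟩
  · rw [dist_comm b a]; simpa using h0
  · intro s hs t ht
    rw [dist_comm b a] at hs ht
    have := h2 (dist a b - s) ⟨by linarith [hs.2], by linarith [hs.1]⟩
      (dist a b - t) ⟨by linarith [ht.2], by linarith [ht.1]⟩
    simp only at this ⊢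
    rw [this, abs_sub_comm]
    congr 1; ring

/-- Key estimate: if the half-distance is below the Gromov product, the distance from `x`
to the midpoint of `[a,b]` is controlled. -/
lemma key_est {H : Type} [MetricSpace H] (δ : ℝ) (hgeo : IsGeodesicSpace H)
    (hthin : ThinTriangles H δ) (a b x : H) (f : ℝ → H) (hf : IsGeodesicParam a b f)
    (h : dist a b / 2 ≤ gromovProd a b x) :
    dist x (f (dist a b / 2)) ≤ dist a x - dist a b / 2 + δ := by
  obtain ⟨g, hg⟩ := hgeo a x
  have hd : (0:ℝ) ≤ dist a b := dist_nonneg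
  have hgp : gromovProd a b x ≤ dist a x := by
    have h1 := dist_triangle b x a
    have e1 : dist x a = dist a x := dist_comm x a
    unfold gromovProd
    linarith
  have hthin' := hthin a b x f g hf hg (dist a b / 2) ⟨by linarith, h⟩
  have hle : dist a b / 2 ≤ dist a x := le_trans h hgp
  have hxg : dist (g (dist a b / 2)) x = dist a x - dist a b / 2 := by
    have h2 := hg.2.2 (dist a b / 2) ⟨by linarith, hle⟩ (dist a x) ⟨dist_nonneg, le_refl _⟩
    rw [hg.2.1] at h2
    rw [h2, abs_of_nonpos (by linarith)]
    ring
  calc dist x (f (dist a b / 2))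
      ≤ dist x (g (dist a b / 2)) + dist (g (dist a b / 2)) (f (dist a b / 2)) :=
        dist_triangle _ _ _
    _ ≤ (dist a x - dist a b / 2) + δ := by
        have e2 := dist_comm (g (dist a b / 2)) (f (dist a b / 2))
        rw [dist_comm x (g (dist a b / 2)), hxg, e2]
        linarith [hthin']

/-- Sum of the two Gromov products along a side. -/
lemma gromovProd_sum {H : Type} [MetricSpace H] (a b x : H) :
    gromovProd a b x + gromovProd b a x = dist a b := by
  unfold gromovProd
  have e1 : dist b a = dist a b := dist_comm b a
  have e2 : dist x a = dist a x := dist_comm x a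
  have e3 : dist x b = dist b x := dist_comm x b
  linarith

/-- Lemma 2.3 (center vs midpoint): if `m` is the midpoint of a diameter-realizing segment
`[a,b]` of a finite set `X` and `c` is an `ε`-center of `X`, then `d(c,m) ≤ ε + 2δ`. -/
theorem center_vs_midpoint {H : Type} [MetricSpace H] (δ : ℝ)
    (hhyp : IsDeltaHyperbolic H δ)
    (X : Finset H) (hX : X.Nonempty) (a b : H) (ha : a ∈ X) (hb : b ∈ X)
    (hdiam : ∀ p ∈ X, ∀ q ∈ X, dist p q ≤ dist a b)
    (f : ℝ → H) (hf : IsGeodesicParam a b f) (m : H) (hm : m = f (dist a b / 2))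
    (ε : ℝ) (hε : 0 < ε) (c : H)
    (hc : (X : Set H) ⊆ Metric.closedBall c (setRadius (X : Set H) + ε)) :
    dist c m ≤ ε + 2 * δ := by
  obtain ⟨hgeo, hthin, -⟩ := hhyp
  have hf' := isGeodesicParam_rev a b f hf
  have hba : dist b a = dist a b := dist_comm b a
  have hmid : dist a b - dist b a / 2 = dist a b / 2 := by rw [hba]; ring
  -- estimate for any point x with dist to a and b controlled
  have main : ∀ x : H, dist x m ≤ max (dist a x) (dist b x) - dist a b / 2 + δ := by
    intro x
    rcases le_or_gt (dist a b / 2) (gromovProd a b x) with h | h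
    · have := key_est δ hgeo hthin a b x f hf h
      rw [hm]
      calc dist x (f (dist a b / 2)) ≤ dist a x - dist a b / 2 + δ := this
        _ ≤ max (dist a x) (dist b x) - dist a b / 2 + δ := by
            have := le_max_left (dist a x) (dist b x); linarith
    · have h2 : dist b a / 2 ≤ gromovProd b a x := by
        have := gromovProd_sum a b x
        rw [hba]; linarith
      have := key_est δ hgeo hthin b a x _ hf' h2
      simp only [hmid] at this
      rw [hm]
      calc dist x (f (dist a b / 2)) ≤ dist b x - dist b a / 2 + δ := this
        _ ≤ max (dist a x) (dist b x) - dist a b / 2 + δ := by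
            have := le_max_right (dist a x) (dist b x); rw [hba] at *; linarith
  -- the midpoint covers X within d/2 + δ
  have cover : ∀ x ∈ X, dist x m ≤ dist a b / 2 + δ := by
    intro x hx
    have h1 : dist a x ≤ dist a b := hdiam a ha x hx
    have h2 : dist b x ≤ dist a b := hdiam b hb x hx
    have := main x
    have hmax : max (dist a x) (dist b x) ≤ dist a b := max_le h1 h2
    linarith
  -- radius bound
  have hr : setRadius (X : Set H) ≤ dist a b / 2 + δ := by
    apply csInf_le
    · refine ⟨0, fun r hr => ?_⟩
      obtain ⟨c', hc'⟩ := hr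
      have := hc' (show a ∈ (X : Set H) from ha)
      exact le_trans dist_nonneg (Metric.mem_closedBall.mp this)
    · exact ⟨m, fun x hx => Metric.mem_closedBall.mpr (cover x hx)⟩
  -- finish
  have hac : dist a c ≤ setRadius (X : Set H) + ε :=
    Metric.mem_closedBall.mp (hc (show a ∈ (X : Set H) from ha))
  have hbc : dist b c ≤ setRadius (X : Set H) + ε :=
    Metric.mem_closedBall.mp (hc (show b ∈ (X : Set H) from hb))
  have := main c
  have hmax : max (dist a c) (dist b c) ≤ setRadius (X : Set H) + ε := max_le hac hbc
  have hcm : dist c m = dist m c := dist_comm c m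
  rw [dist_comm c m] at *
  linarith [dist_comm m c, main c]
end

section
/- Let H be a δ-hyperbolic geodesic metric space with basepoint o, X a finite nonempty subset of H with radius r = r(X), and c an ε-center of X for some ε > 0. Then |X| − r − ε ≤ |c| ≤ |X| − r + 4δ + ε. -/
/-- Lemma 2.4 (distance from origin to center): for a finite nonempty set `X` with radius
`r` and `ε`-center `c`, one has `|X| − r − ε ≤ |c| ≤ |X| − r + 4δ + ε`. -/
theorem dist_origin_to_center {H : Type} [MetricSpace H] (δ : ℝ)
    (hhyp : IsDeltaHyperbolic H δ) (o : H)
    (X : Finset H) (hX : X.Nonempty)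
    (ε : ℝ) (hε : 0 < ε) (c : H)
    (hc : (X : Set H) ⊆ Metric.closedBall c (setRadius (X : Set H) + ε)) :
    X.sup' hX (fun p => dist p o) - setRadius (X : Set H) - ε ≤ dist c o ∧
    dist c o ≤ X.sup' hX (fun p => dist p o) - setRadius (X : Set H) + 4 * δ + ε := by
  obtain ⟨hgeo, hthin, _⟩ := hhyp
  set M := X.sup' hX (fun p => dist p o) with hM
  set r := setRadius (X : Set H) with hrdef
  obtain ⟨x0, hx0⟩ := hX
  -- δ ≥ 0
  have hδ : 0 ≤ δ := by
    obtain ⟨f, hf⟩ := hgeo o o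
    have h0 : (0:ℝ) ∈ Set.Icc (0:ℝ) (gromovProd o o o) := by
      constructor
      · exact le_refl 0
      · simp [gromovProd]
    have := hthin o o o f f hf hf 0 h0
    simpa using this
  have hMmem : M ∈ {R : ℝ | ∃ c', (X : Set H) ⊆ Metric.closedBall c' R} := by
    refine ⟨o, fun p hp => ?_⟩
    exact Metric.mem_closedBall.mpr (Finset.le_sup' (fun p => dist p o) hp)
  have hbdd : BddBelow {R : ℝ | ∃ c', (X : Set H) ⊆ Metric.closedBall c' R} := by
    refine ⟨0, fun R hR => ?_⟩
    obtain ⟨c', hc'⟩ := hR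
    exact le_trans dist_nonneg (Metric.mem_closedBall.mp (hc' hx0))
  have hrM : r ≤ M := csInf_le hbdd hMmem
  have hr0 : 0 ≤ r := le_csInf ⟨M, hMmem⟩ (fun R hR => by
    obtain ⟨c', hc'⟩ := hR
    exact le_trans dist_nonneg (Metric.mem_closedBall.mp (hc' hx0)))
  have hMx : ∀ p ∈ X, dist p o ≤ M := fun p hp => Finset.le_sup' (fun p => dist p o) hp
  have hxcball : ∀ p ∈ X, dist p c ≤ r + ε := fun p hp => Metric.mem_closedBall.mp (hc hp)
  constructor
  · -- lower bound
    have hsup : M ≤ dist c o + (r + ε) := by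
      refine Finset.sup'_le _ _ (fun p hp => ?_)
      have h1 := dist_triangle p c o
      have h2 := hxcball p hp
      linarith
    linarith
  · -- upper bound
    set s : ℝ := (r + ε + dist c o - M) / 2 with hs
    rcases lt_or_ge s 0 with hs0 | hs0
    · -- |c| < M - r - ε
      linarith
    rcases lt_or_ge (dist c o) s with hs1 | hs1
    · -- |c| < r + ε - M ≤ ε
      linarith
    -- main case
    obtain ⟨f, hf0, hfc, hfd⟩ := hgeo o c
    have hoc : dist o c = dist c o := dist_comm o c
    set m := f (dist c o - s) with hm
    have hg : IsGeodesicParam c o (fun t => f (dist c o - t)) := by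
      refine ⟨?_, ?_, ?_⟩
      · simp only [sub_zero, ← hoc]
        exact hfc
      · show f (dist c o - dist c o) = o
        rw [sub_self, hf0]
      · intro a ha b hb
        have ha' : dist c o - a ∈ Set.Icc (0:ℝ) (dist o c) := by
          rw [hoc]; exact ⟨by linarith [ha.2], by linarith [ha.1]⟩
        have hb' : dist c o - b ∈ Set.Icc (0:ℝ) (dist o c) := by
          rw [hoc]; exact ⟨by linarith [hb.2], by linarith [hb.1]⟩
        rw [hfd _ ha' _ hb']
        rw [show dist c o - a - (dist c o - b) = -(a - b) by ring, abs_neg]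
    have key : ∀ x ∈ X, dist x m ≤ (r + ε + M - dist c o) / 2 + δ := by
      intro x hx
      have hxc : dist x c ≤ r + ε := hxcball x hx
      have hxo : dist x o ≤ M := hMx x hx
      have hdxc : dist c x = dist x c := dist_comm c x
      have hdxo : dist o x = dist x o := dist_comm o x
      have htri1 := dist_triangle o x c
      have htri2 := dist_triangle o c x
      rcases le_or_gt s (gromovProd c o x) with hcase | hcase
      · -- apex c: use reversed geodesic and geodesic c → x
        obtain ⟨gx, hgx0, hgxe, hgxd⟩ := hgeo c x
        have hthin1 := hthin c o x (fun t => f (dist c o - t)) gx hg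
          ⟨hgx0, hgxe, hgxd⟩ s ⟨hs0, hcase⟩
        -- dist (f (dist c o - s)) (gx s) ≤ δ
        have hgp_le : gromovProd c o x ≤ dist c x := by
          simp only [gromovProd]
          linarith
        have hs_le : s ≤ dist c x := le_trans hcase hgp_le
        have hdx : dist x (gx s) = dist c x - s := by
          have h1 : dist c x ∈ Set.Icc (0:ℝ) (dist c x) := ⟨dist_nonneg, le_refl _⟩
          have h2 : s ∈ Set.Icc (0:ℝ) (dist c x) := ⟨hs0, hs_le⟩
          have := hgxd _ h1 _ h2
          rw [hgxe] at this
          rw [this, abs_of_nonneg (by linarith)]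
        have htri := dist_triangle x (gx s) m
        have hsym : dist (gx s) m = dist (f (dist c o - s)) (gx s) := by
          rw [hm, dist_comm]
        rw [hsym] at htri
        have : dist x m ≤ dist c x - s + δ := by linarith
        linarith
      · -- apex o: use f (o → c) and geodesic o → x
        obtain ⟨fx, hfx0, hfxe, hfxd⟩ := hgeo o x
        have hgpsum : gromovProd c o x + gromovProd o c x = dist c o := by
          have e1 : dist x o = dist o x := dist_comm x o
          simp only [gromovProd]
          linarith
        have ht_le : dist c o - s ≤ gromovProd o c x := by linarith
        have ht0 : 0 ≤ dist c o - s := by linarith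
        have hthin2 := hthin o c x f fx ⟨hf0, hfc, hfd⟩ ⟨hfx0, hfxe, hfxd⟩
          (dist c o - s) ⟨ht0, ht_le⟩
        -- dist (f (dist c o - s)) (fx (dist c o - s)) ≤ δ
        have hgp_le : gromovProd o c x ≤ dist o x := by
          simp only [gromovProd]
          have := dist_triangle c o x
          have h1 : dist c o = dist o c := dist_comm c o
          have h2 : dist x o = dist o x := dist_comm x o
          have h3 : dist c x = dist x c := dist_comm c x
          linarith [dist_triangle c x o]
        have ht_le2 : dist c o - s ≤ dist o x := le_trans ht_le hgp_le
        have hdx : dist x (fx (dist c o - s)) = dist o x - (dist c o - s) := by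
          have h1 : dist o x ∈ Set.Icc (0:ℝ) (dist o x) := ⟨dist_nonneg, le_refl _⟩
          have h2 : dist c o - s ∈ Set.Icc (0:ℝ) (dist o x) := ⟨ht0, ht_le2⟩
          have := hfxd _ h1 _ h2
          rw [hfxe] at this
          rw [this, abs_of_nonneg (by linarith)]
        have htri := dist_triangle x (fx (dist c o - s)) m
        have hsym : dist (fx (dist c o - s)) m = dist (f (dist c o - s)) (fx (dist c o - s)) := by
          rw [hm, dist_comm]
        rw [hsym] at htri
        have : dist x m ≤ dist o x - (dist c o - s) + δ := by linarith
        linarith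
    have hrle : r ≤ (r + ε + M - dist c o) / 2 + δ :=
      csInf_le hbdd ⟨m, fun p hp => Metric.mem_closedBall.mpr (key p hp)⟩
    linarith
end

section
/- Let a group G act by isometries on a δ-hyperbolic geodesic metric space H with minimal displacement strictly greater than 3δ. Then G acts freely on the collection of finite nonempty subsets of H: if X ⊆ H is finite and nonempty and g ∈ G satisfies g·X = X, then g = 1. -/
open Pointwise

/-- Reversal of a geodesic parametrization. -/
lemma IsGeodesicParam.rev {H : Type*} [MetricSpace H] {x y : H} {f : ℝ → H}
    (h : IsGeodesicParam x y f) :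
    IsGeodesicParam y x (fun t => f (dist x y - t)) := by
  obtain ⟨h0, h1, hd⟩ := h
  refine ⟨by simpa using h1, by rw [dist_comm y x]; simpa using h0, ?_⟩
  intro s hs t ht
  rw [dist_comm y x] at hs ht
  have hs' : dist x y - s ∈ Set.Icc (0:ℝ) (dist x y) := by
    constructor <;> [linarith [hs.2]; linarith [hs.1]]
  have ht' : dist x y - t ∈ Set.Icc (0:ℝ) (dist x y) := by
    constructor <;> [linarith [ht.2]; linarith [ht.1]]
  rw [hd _ hs' _ ht']
  rw [abs_sub_comm]
  ring_nf

/-- One-sided center estimate: if `dist q s ≤ dist p s`, the midpoint of a geodesic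
from `p` to `q` is within `dist p s - dist p q / 2 + δ` of `s`. -/
lemma half_est {H : Type*} [MetricSpace H] {δ : ℝ}
    (hgeo : IsGeodesicSpace H) (hthin : ThinTriangles H δ)
    {p q : H} (s : H) {f1 : ℝ → H} (h1 : IsGeodesicParam p q f1)
    (hle : dist q s ≤ dist p s) :
    dist (f1 (dist p q / 2)) s ≤ dist p s - dist p q / 2 + δ := by
  obtain ⟨f2, h2⟩ := hgeo p s
  set L := dist p q with hL
  have hL0 : 0 ≤ L := dist_nonneg
  have htri : L ≤ dist p s + dist q s := by
    have := dist_triangle p s q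
    rw [dist_comm s q] at this
    linarith
  have hhalf : L / 2 ≤ dist p s := by linarith
  have hgp : L / 2 ≤ gromovProd p q s := by
    simp only [gromovProd, dist_comm q p, dist_comm s p, ← hL]
    linarith
  have hthin' := hthin p q s f1 f2 h1 h2 (L / 2) ⟨by linarith, hgp⟩
  have hmem1 : L / 2 ∈ Set.Icc (0:ℝ) (dist p s) := ⟨by linarith, hhalf⟩
  have hmem2 : dist p s ∈ Set.Icc (0:ℝ) (dist p s) := ⟨dist_nonneg, le_refl _⟩
  have hd2 : dist (f2 (L / 2)) s = dist p s - L / 2 := by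
    have := h2.2.2 (L / 2) hmem1 (dist p s) hmem2
    rw [h2.2.1] at this
    rw [this, abs_of_nonpos (by linarith)]
    ring
  calc dist (f1 (L / 2)) s ≤ dist (f1 (L / 2)) (f2 (L / 2)) + dist (f2 (L / 2)) s :=
        dist_triangle _ _ _
    _ ≤ δ + (dist p s - L / 2) := by rw [hd2]; linarith
    _ = dist p s - L / 2 + δ := by ring

/-- Center estimate: the midpoint of a geodesic from `p` to `q` is within
`R - dist p q / 2 + δ` of any point `s` with `dist p s ≤ R` and `dist q s ≤ R`. -/
lemma center_est {H : Type*} [MetricSpace H] {δ : ℝ}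
    (hgeo : IsGeodesicSpace H) (hthin : ThinTriangles H δ)
    {p q : H} (s : H) {f1 : ℝ → H} (h1 : IsGeodesicParam p q f1)
    {R : ℝ} (hp : dist p s ≤ R) (hq : dist q s ≤ R) :
    dist (f1 (dist p q / 2)) s ≤ R - dist p q / 2 + δ := by
  rcases le_total (dist q s) (dist p s) with h | h
  · have := half_est hgeo hthin s h1 h
    linarith
  · have := half_est hgeo hthin s h1.rev h
    rw [dist_comm q p] at this
    have heq : dist p q - dist p q / 2 = dist p q / 2 := by ring
    rw [heq] at this
    linarith

/-- Corollary 2.4 (equivariant choice of centers): if `G` acts isometrically on a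
`δ`-hyperbolic geodesic space with minimal displacement `> 3δ`, then `G` acts freely on
the collection of finite nonempty subsets: `g • X = X` forces `g = 1`. -/
theorem free_action_on_finite_subsets {G H : Type} [Group G] [MetricSpace H]
    [MulAction G H] (hiso : ∀ g : G, Isometry (fun p : H => g • p))
    (δ : ℝ) (hhyp : IsDeltaHyperbolic H δ)
    (hdisp : ∀ g : G, g ≠ 1 → ∀ p : H, 3 * δ < dist (g • p) p)
    (X : Set H) (hfin : X.Finite) (hne : X.Nonempty)
    (g : G) (hgX : g • X = X) : g = 1 := by
  by_contra hg
  obtain ⟨x0, hx0⟩ := hne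
  obtain ⟨hgeo, hthin, _⟩ := hhyp
  have hdist : ∀ (h : G) (a b : H), dist (h • a) (h • b) = dist a b := fun h a b =>
    (hiso h).dist_eq a b
  -- δ ≥ 0
  have hδ0 : 0 ≤ δ := by
    obtain ⟨f, hf⟩ := hgeo x0 x0
    have := hthin x0 x0 x0 f f hf hf 0
      ⟨le_refl _, by simp [gromovProd]⟩
    simpa using this
  -- membership facts
  have hmemg : ∀ s ∈ X, g • s ∈ X := by
    intro s hs
    rw [← hgX]
    exact Set.smul_mem_smul_set hs
  have hmemginv : ∀ s ∈ X, g⁻¹ • s ∈ X := by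
    intro s hs
    rw [← hgX] at hs
    obtain ⟨x, hx, rfl⟩ := hs
    simpa using hx
  rcases hδ0.lt_or_eq with hδ | hδ
  · -- δ > 0 : use ε-centers with ε = δ/2
    set s0 := hfin.toFinset with hs0
    have hs0ne : s0.Nonempty := ⟨x0, hfin.mem_toFinset.mpr hx0⟩
    set f : H → ℝ := fun p => s0.sup' hs0ne (fun x => dist p x) with hfdef
    have hfle : ∀ p : H, ∀ s ∈ X, dist p s ≤ f p := by
      intro p s hs
      exact Finset.le_sup' _ (hfin.mem_toFinset.mpr hs)
    have hf0 : ∀ p : H, 0 ≤ f p :=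
      fun p => le_trans dist_nonneg (hfle p x0 hx0)
    have hbdd : BddBelow (Set.range f) := ⟨0, fun a ⟨p, hp⟩ => hp ▸ hf0 p⟩
    set r := sInf (Set.range f) with hr
    obtain ⟨a, ⟨p, rfl⟩, hap⟩ := exists_lt_of_csInf_lt (Set.nonempty_of_mem (Set.mem_range_self x0))
      (show r < r + δ / 2 by linarith)
    set q := g • p with hq
    have hL : 3 * δ < dist p q := by
      have := hdisp g hg p
      rwa [dist_comm] at this
    obtain ⟨f1, h1⟩ := hgeo p q
    set m := f1 (dist p q / 2) with hm
    have hqs : ∀ s ∈ X, dist q s ≤ f p := by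
      intro s hs
      have : dist q s = dist p (g⁻¹ • s) := by
        rw [← hdist g p (g⁻¹ • s)]
        simp [hq]
      rw [this]
      exact hfle p _ (hmemginv s hs)
    have hms : ∀ s ∈ X, dist m s ≤ f p - dist p q / 2 + δ := fun s hs =>
      center_est hgeo hthin s h1 (hfle p s hs) (hqs s hs)
    have hfm : f m ≤ f p - dist p q / 2 + δ := by
      apply Finset.sup'_le
      intro x hx
      exact hms x (hfin.mem_toFinset.mp hx)
    have hrm : r ≤ f m := csInf_le hbdd ⟨m, rfl⟩
    linarith
  · -- δ = 0 : exact centers via diameter pairs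
    subst hδ
    have hx0' : x0 ∈ hfin.toFinset := hfin.mem_toFinset.mpr hx0
    obtain ⟨⟨y, z⟩, hyz, hmax⟩ := Finset.exists_max_image (hfin.toFinset ×ˢ hfin.toFinset)
      (fun a : H × H => dist a.1 a.2) ⟨(x0, x0), Finset.mem_product.mpr ⟨hx0', hx0'⟩⟩
    have hy : y ∈ X := hfin.mem_toFinset.mp (Finset.mem_product.mp hyz).1
    have hz : z ∈ X := hfin.mem_toFinset.mp (Finset.mem_product.mp hyz).2
    have hDmax : ∀ a ∈ X, ∀ b ∈ X, dist a b ≤ dist y z := by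
      intro a ha b hb
      exact hmax (a, b) (Finset.mem_product.mpr
        ⟨hfin.mem_toFinset.mpr ha, hfin.mem_toFinset.mpr hb⟩)
    obtain ⟨f1, h1⟩ := hgeo y z
    have hms : ∀ s ∈ X, dist (f1 (dist y z / 2)) s ≤ dist y z / 2 := by
      intro s hs
      have := center_est hgeo hthin s h1 (hDmax y hy s hs) (hDmax z hz s hs)
      linarith
    have hgy : g • y ∈ X := hmemg y hy
    have hgz : g • z ∈ X := hmemg z hz
    have hDg : dist (g • y) (g • z) = dist y z := hdist g y z
    have hmgy : dist (f1 (dist y z / 2)) (g • y) ≤ dist y z / 2 := hms _ hgy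
    have hmgz : dist (f1 (dist y z / 2)) (g • z) ≤ dist y z / 2 := hms _ hgz
    have htri := dist_triangle (g • y) (f1 (dist y z / 2)) (g • z)
    have ec1 : dist (g • y) (f1 (dist y z / 2)) = dist (f1 (dist y z / 2)) (g • y) :=
      dist_comm _ _
    have ec2 : dist (g • z) (f1 (dist y z / 2)) = dist (f1 (dist y z / 2)) (g • z) :=
      dist_comm _ _
    have hmgy' : dist (g • y) (f1 (dist y z / 2)) = dist y z / 2 := by linarith
    have hmgz' : dist (g • z) (f1 (dist y z / 2)) = dist y z / 2 := by linarith
    have h1' : IsGeodesicParam (g • y) (g • z) (fun t => g • f1 t) := by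
      refine ⟨?_, ?_, ?_⟩
      · show g • f1 0 = g • y
        rw [h1.1]
      · show g • f1 (dist (g • y) (g • z)) = g • z
        rw [hDg, h1.2.1]
      · intro s hs t ht
        rw [hDg] at hs ht
        show dist (g • f1 s) (g • f1 t) = |s - t|
        rw [hdist]
        exact h1.2.2 s hs t ht
    obtain ⟨f2, h2⟩ := hgeo (g • y) (f1 (dist y z / 2))
    have hgprod : gromovProd (g • y) (g • z) (f1 (dist y z / 2)) = dist y z / 2 := by
      have e1 : dist (g • z) (g • y) = dist y z := by rw [hdist, dist_comm]
      simp only [gromovProd]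
      rw [e1, dist_comm (f1 (dist y z / 2)) (g • y), hmgy', hmgz']
      ring
    have hD0 : (0:ℝ) ≤ dist y z := dist_nonneg
    have hthin' := hthin (g • y) (g • z) (f1 (dist y z / 2)) _ _ h1' h2 (dist y z / 2)
      ⟨by linarith, hgprod.ge⟩
    have hf2 : f2 (dist y z / 2) = f1 (dist y z / 2) := by
      have := h2.2.1
      rwa [hmgy'] at this
    rw [hf2] at hthin'
    have hle : dist (g • f1 (dist y z / 2)) (f1 (dist y z / 2)) ≤ 0 := hthin'
    have := hdisp g hg (f1 (dist y z / 2))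
    linarith
end

section
/- Let H be a δ-hyperbolic geodesic metric space with basepoint o, let μ, ε > 0, let V be a finite set partitioned into n colors V = V₁ ⊔ ⋯ ⊔ V_n, and let (Y_v)_{v∈V} be bounded nonempty subsets of H with radii r_v = r(Y_v) and chosen ε-centers c_v. Write d := sup{|p| : p ∈ ⋃_{v∈V} Y_v}; a point p ∈ ⋃_v Y_v is μ-extremal if |p| ≥ d − μ. Assume that for each i and any two distinct v, w ∈ V_i we have r_v = r_w and d(c_v, c_w) > 2μ + (10+2n)δ + 4ε. Then for every sequence v₀, v₁, …, v_m of pairwise distinct elements of V such that for each j < m there is a μ-extremal point lying in Y_{v_j} ∩ Y_{v_{j+1}}, one has m ≤ 2ⁿ − 2. -/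
private lemma gromov_dist_eq {H : Type} [MetricSpace H] (o x y : H) :
    dist x y = dist x o + dist y o - 2 * gromovProd o x y := by
  unfold gromovProd; ring

/-- Chaining Gromov products along a path of `E ≤ 2^k` edges loses at most `k·δ`. -/
private lemma gromov_chain {H : Type} [MetricSpace H] {δ : ℝ} (hδ : 0 ≤ δ) (o : H)
    (h4 : ∀ w x y z : H, min (gromovProd w x y) (gromovProd w y z) - δ ≤ gromovProd w x z)
    (G : ℝ) :
    ∀ (k : ℕ) (x : ℕ → H) (E : ℕ), 1 ≤ E → E ≤ 2 ^ k →
      (∀ j < E, G ≤ gromovProd o (x j) (x (j + 1))) →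
      G - k * δ ≤ gromovProd o (x 0) (x E) := by
  intro k
  induction k with
  | zero =>
    intro x E h1 h2 hj
    have hE : E = 1 := by simp at h2; omega
    subst hE
    simpa using hj 0 one_pos
  | succ k ih =>
    intro x E h1 h2 hj
    have hcast : ((k + 1 : ℕ) : ℝ) * δ = (k : ℝ) * δ + δ := by push_cast; ring
    by_cases hE : E ≤ 2 ^ k
    · have h := ih x E h1 hE hj
      rw [hcast]; linarith
    · push_neg at hE
      have hps : 2 ^ (k + 1) = 2 ^ k * 2 := pow_succ 2 k
      have h2k : 1 ≤ 2 ^ k := Nat.one_le_two_pow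
      have ha := ih x (2 ^ k) h2k le_rfl (fun j hj' => hj j (by omega))
      have hb := ih (fun j => x (2 ^ k + j)) (E - 2 ^ k) (by omega) (by omega)
        (fun j hj' => by
          have h' := hj (2 ^ k + j) (by omega)
          have heq : 2 ^ k + j + 1 = 2 ^ k + (j + 1) := by omega
          rw [heq] at h'
          exact h')
      have hb' : G - (k : ℝ) * δ ≤ gromovProd o (x (2 ^ k)) (x E) := by
        have h0 : 2 ^ k + 0 = 2 ^ k := by omega
        have h1' : 2 ^ k + (E - 2 ^ k) = E := by omega
        simpa only [h0, h1'] using hb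
      have h4' := h4 o (x 0) (x (2 ^ k)) (x E)
      have hmin : G - (k : ℝ) * δ ≤
          min (gromovProd o (x 0) (x (2 ^ k))) (gromovProd o (x (2 ^ k)) (x E)) :=
        le_min ha hb'
      rw [hcast]
      linarith

/-- Proposition 3.1 (path bound in the extremal graph): with `V` partitioned into `n`
colors, bounded nonempty sets `Y_v` with radii `r_v` and `ε`-centers `c_v`, if vertices of
equal color have equal radii and far-apart centers, then every embedded path in the
`μ`-extremal graph (consecutive sets sharing a `μ`-extremal point) has length at most
`2ⁿ − 2`. -/
theorem extremal_graph_path_bound {H : Type} [MetricSpace H] (δ : ℝ)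
    (hhyp : IsDeltaHyperbolic H δ) (o : H)
    (μ ε : ℝ) (hμ : 0 < μ) (hε : 0 < ε) (n : ℕ)
    (V : Type) [Fintype V] (color : V → Fin n)
    (Y : V → Set H) (hbd : ∀ v, Bornology.IsBounded (Y v)) (hne : ∀ v, (Y v).Nonempty)
    (c : V → H) (hc : ∀ v, Y v ⊆ Metric.closedBall (c v) (setRadius (Y v) + ε))
    (hcol : ∀ v w : V, v ≠ w → color v = color w →
      setRadius (Y v) = setRadius (Y w) ∧
      2 * μ + (10 + 2 * (n : ℝ)) * δ + 4 * ε < dist (c v) (c w))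
    (d : ℝ) (hd : d = sSup ((fun p => dist p o) '' ⋃ v, Y v))
    (m : ℕ) (vseq : Fin (m + 1) → V) (hinj : Function.Injective vseq)
    (hpath : ∀ j : Fin m, ∃ p : H, d - μ ≤ dist p o ∧
      p ∈ Y (vseq j.castSucc) ∧ p ∈ Y (vseq j.succ)) :
    m ≤ 2 ^ n - 2 := by
  classical
  obtain ⟨hgeo, hthin, h4⟩ := hhyp
  -- `δ` is nonnegative
  have hδ : 0 ≤ δ := by
    obtain ⟨f, hf⟩ := hgeo o o
    have h0 : gromovProd o o o = 0 := by unfold gromovProd; simp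
    have h := hthin o o o f f hf hf 0 (by rw [h0]; exact ⟨le_refl _, le_refl _⟩)
    rw [hf.1] at h
    simpa using h
  -- boundedness facts
  haveI : Nonempty V := ⟨vseq 0⟩
  have hbddA : BddAbove ((fun p => dist p o) '' ⋃ v, Y v) := by
    have hR : ∀ v : V, ∃ r, Y v ⊆ Metric.closedBall o r := fun v => (hbd v).subset_closedBall o
    choose R hR using hR
    refine ⟨Finset.univ.sup' Finset.univ_nonempty R, ?_⟩
    rintro x ⟨q, hq, rfl⟩
    obtain ⟨v, hv⟩ := Set.mem_iUnion.mp hq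
    exact le_trans (Metric.mem_closedBall.mp (hR v hv)) (Finset.le_sup' R (Finset.mem_univ v))
  have hdub : ∀ v, ∀ y ∈ Y v, dist y o ≤ d := by
    intro v y hy
    rw [hd]
    exact le_csSup hbddA ⟨y, Set.mem_iUnion.mpr ⟨v, hy⟩, rfl⟩
  have hd0 : 0 ≤ d := by
    obtain ⟨y, hy⟩ := hne (vseq 0)
    exact le_trans dist_nonneg (hdub _ y hy)
  -- radius facts
  have hradbb : ∀ v, BddBelow {r : ℝ | ∃ c', Y v ⊆ Metric.closedBall c' r} := by
    intro v
    refine ⟨0, ?_⟩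
    rintro r ⟨c', hc'⟩
    obtain ⟨y, hy⟩ := hne v
    exact le_trans dist_nonneg (Metric.mem_closedBall.mp (hc' hy))
  have hradle : ∀ v (c' : H) (r : ℝ), Y v ⊆ Metric.closedBall c' r → setRadius (Y v) ≤ r :=
    fun v c' r h => csInf_le (hradbb v) ⟨c', h⟩
  have hrd : ∀ v, setRadius (Y v) ≤ d :=
    fun v => hradle v o d (fun y hy => Metric.mem_closedBall.mpr (hdub v y hy))
  -- upper bound for centers : |c v| ≤ d - r_v + ε + 4δ
  have hcu : ∀ v, dist (c v) o ≤ d - setRadius (Y v) + ε + 4 * δ := by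
    intro v
    refine le_of_forall_pos_le_add ?_
    intro η hη
    by_cases hRh : dist (c v) o ≤ ε + 2 * δ + η
    · have := hrd v; linarith
    · push_neg at hRh
      obtain ⟨f, hf0, hfe, hfi⟩ := hgeo o (c v)
      have hdoc : dist o (c v) = dist (c v) o := dist_comm o (c v)
      set t : ℝ := dist (c v) o - (ε + 2 * δ + η) with htdef
      have ht0 : 0 ≤ t := by linarith
      have htR : t ≤ dist (c v) o := by linarith
      have htmem : t ∈ Set.Icc (0:ℝ) (dist o (c v)) := by rw [hdoc]; exact ⟨ht0, htR⟩
      have h0mem : (0:ℝ) ∈ Set.Icc (0:ℝ) (dist o (c v)) := ⟨le_refl _, dist_nonneg⟩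
      have hRmem : dist o (c v) ∈ Set.Icc (0:ℝ) (dist o (c v)) := ⟨dist_nonneg, le_refl _⟩
      have hc'o : dist (f t) o = t := by
        have h := hfi t htmem 0 h0mem
        rw [hf0] at h
        rw [h, sub_zero, abs_of_nonneg ht0]
      have hc'c : dist (f t) (c v) = ε + 2 * δ + η := by
        have h := hfi t htmem (dist o (c v)) hRmem
        rw [hfe] at h
        rw [h, hdoc, abs_of_nonpos (by linarith), htdef]
        ring
      have hgp1 : gromovProd o (f t) (c v) = t := by
        unfold gromovProd
        rw [hc'o, hc'c, htdef]
        ring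
      have hball : ∀ y ∈ Y v,
          y ∈ Metric.closedBall (f t) (max (d - t + 2 * δ) (setRadius (Y v) - η)) := by
        intro y hy
        have hcy : dist y (c v) ≤ setRadius (Y v) + ε := Metric.mem_closedBall.mp (hc v hy)
        have h4' := h4 o (f t) (c v) y
        rw [hgp1] at h4'
        have hyd := hdub v y hy
        have hid1 : dist (f t) y = dist (f t) o + dist y o - 2 * gromovProd o (f t) y :=
          gromov_dist_eq o (f t) y
        have hid2 : dist (c v) y = dist (c v) o + dist y o - 2 * gromovProd o (c v) y :=
          gromov_dist_eq o (c v) y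
        rw [Metric.mem_closedBall, dist_comm]
        rcases le_total t (gromovProd o (c v) y) with hm | hm
        · rw [min_eq_left hm] at h4'
          have hle : dist (f t) y ≤ d - t + 2 * δ := by
            rw [hid1, hc'o]; linarith
          exact le_trans hle (le_max_left _ _)
        · rw [min_eq_right hm] at h4'
          have hcy' : dist (c v) y ≤ setRadius (Y v) + ε := by
            rw [dist_comm]; exact hcy
          rw [hid2] at hcy'
          have hle : dist (f t) y ≤ setRadius (Y v) - η := by
            rw [hid1, hc'o]; linarith
          exact le_trans hle (le_max_right _ _)
      have hrle : setRadius (Y v) ≤ max (d - t + 2 * δ) (setRadius (Y v) - η) :=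
        hradle v (f t) _ hball
      have hkey : setRadius (Y v) ≤ d - t + 2 * δ := by
        rcases le_max_iff.mp hrle with h | h
        · exact h
        · linarith
      linarith
  -- discrete path set-up
  let vv : ℕ → V := fun j => vseq ⟨min j m, Nat.lt_succ_of_le (min_le_right j m)⟩
  have hvvinj : ∀ a b : ℕ, a ≤ m → b ≤ m → a ≠ b → vv a ≠ vv b := by
    intro a b ha hb hab h
    have h2 := hinj h
    rw [Fin.mk.injEq] at h2
    omega
  have hcol' : ∀ a b : ℕ, a ≤ m → b ≤ m → a ≠ b → color (vv a) = color (vv b) →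
      setRadius (Y (vv a)) = setRadius (Y (vv b)) ∧
      2 * μ + (10 + 2 * (n : ℝ)) * δ + 4 * ε < dist (c (vv a)) (c (vv b)) :=
    fun a b ha hb hab hcc => hcol _ _ (hvvinj a b ha hb hab) hcc
  have hP : ∀ j : ℕ, ∃ q : H, j < m →
      (d - μ ≤ dist q o ∧ q ∈ Y (vv j) ∧ q ∈ Y (vv (j + 1))) := by
    intro j
    by_cases hj : j < m
    · obtain ⟨q, h1, h2, h3⟩ := hpath ⟨j, hj⟩
      refine ⟨q, fun _ => ⟨h1, ?_, ?_⟩⟩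
      · have he : (⟨j, hj⟩ : Fin m).castSucc
            = (⟨min j m, Nat.lt_succ_of_le (min_le_right j m)⟩ : Fin (m + 1)) := by
          apply Fin.ext
          simp [Nat.min_eq_left hj.le]
        rw [he] at h2
        exact h2
      · have he : (⟨j, hj⟩ : Fin m).succ
            = (⟨min (j + 1) m, Nat.lt_succ_of_le (min_le_right (j + 1) m)⟩ : Fin (m + 1)) := by
          apply Fin.ext
          simp [Nat.min_eq_left (by omega : j + 1 ≤ m)]
        rw [he] at h3
        exact h3
    · exact ⟨o, fun h => absurd h hj⟩
  choose p hp using hP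
  let rr : ℕ → ℝ := fun j => setRadius (Y (vv j))
  -- the key geometric statement: no short monochromatic repetition over lower radii
  have key : ∀ a b : ℕ, a < b → b ≤ m → b - a ≤ 2 ^ n - 1 →
      color (vv a) = color (vv b) → (∀ j, a < j → j < b → rr j ≤ rr a) → False := by
    intro a b hab hbm hba hcc hlow
    obtain ⟨hreq, hdist⟩ := hcol' a b (by omega) hbm (by omega) hcc
    have h2n : 1 ≤ 2 ^ n := Nat.one_le_two_pow
    let x : ℕ → H := fun j =>
      if j = 0 then c (vv a) else if j ≤ b - a then p (a + j - 1) else c (vv b)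
    have hx0 : x 0 = c (vv a) := rfl
    have hxmid : ∀ j, 1 ≤ j → j ≤ b - a → x j = p (a + j - 1) := by
      intro j h1 h2
      show (if j = 0 then c (vv a) else if j ≤ b - a then p (a + j - 1) else c (vv b))
          = p (a + j - 1)
      rw [if_neg (by omega), if_pos h2]
    have hxlast : x (b - a + 1) = c (vv b) := by
      show (if b - a + 1 = 0 then c (vv a) else
        if b - a + 1 ≤ b - a then p (a + (b - a + 1) - 1) else c (vv b)) = c (vv b)
      rw [if_neg (by omega), if_neg (by omega)]
    -- the edges of the chain
    have hedge : ∀ j, j < b - a + 1 →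
        d - μ - rr a - ε ≤ gromovProd o (x j) (x (j + 1)) := by
      intro j hjE
      rcases Nat.eq_zero_or_pos j with hj0 | hj1
      · subst hj0
        have hx1 : x 1 = p a := by
          have := hxmid 1 le_rfl (by omega)
          rwa [Nat.add_sub_cancel] at this
        have ham : a < m := by omega
        obtain ⟨hq1, hq2, _⟩ := hp a ham
        have h1 : dist (p a) (c (vv a)) ≤ rr a + ε := Metric.mem_closedBall.mp (hc _ hq2)
        have h2 : dist (p a) o ≤ dist (p a) (c (vv a)) + dist (c (vv a)) o :=
          dist_triangle _ _ _
        rw [hx0, hx1]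
        unfold gromovProd
        rw [dist_comm (c (vv a)) (p a)]
        linarith
      · rcases Nat.lt_or_ge j (b - a) with hjb | hjb
        · -- middle edge
          set u : ℕ := a + j with hu
          have hum : u < m := by omega
          have hum1 : u - 1 < m := by omega
          have hxj : x j = p (u - 1) := by
            have h := hxmid j hj1 (by omega)
            rw [h]
          have hxj1 : x (j + 1) = p u := by
            have h := hxmid (j + 1) (by omega) (by omega)
            rw [h]
            congr 1
          obtain ⟨ha1, _, ha3⟩ := hp (u - 1) hum1
          obtain ⟨hb1, hb2, _⟩ := hp u hum
          have heq : u - 1 + 1 = u := by omega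
          rw [heq] at ha3
          have h1 : dist (p (u - 1)) (c (vv u)) ≤ rr u + ε :=
            Metric.mem_closedBall.mp (hc _ ha3)
          have h2 : dist (p u) (c (vv u)) ≤ rr u + ε :=
            Metric.mem_closedBall.mp (hc _ hb2)
          have h3 : dist (p (u - 1)) (p u)
              ≤ dist (p (u - 1)) (c (vv u)) + dist (p u) (c (vv u)) := by
            rw [dist_comm (p u) (c (vv u))]
            exact dist_triangle _ _ _
          have h4u : rr u ≤ rr a := hlow u (by omega) (by omega)
          rw [hxj, hxj1]
          unfold gromovProd
          linarith
        · -- last edge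
          have hjeq : j = b - a := by omega
          subst hjeq
          have hxj : x (b - a) = p (b - 1) := by
            have := hxmid (b - a) hj1 le_rfl
            rw [this]
            congr 1
            omega
          have hbm1 : b - 1 < m := by omega
          obtain ⟨hq1, _, hq3⟩ := hp (b - 1) hbm1
          have heq : b - 1 + 1 = b := by omega
          rw [heq] at hq3
          have h1 : dist (p (b - 1)) (c (vv b)) ≤ rr b + ε :=
            Metric.mem_closedBall.mp (hc _ hq3)
          have h2 : dist (p (b - 1)) o ≤ dist (p (b - 1)) (c (vv b)) + dist (c (vv b)) o :=
            dist_triangle _ _ _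
          have hrba : rr b = rr a := hreq.symm
          rw [hxj, hxlast]
          unfold gromovProd
          linarith
    -- chain the Gromov products
    have hchain := gromov_chain hδ o h4 (d - μ - rr a - ε) n x (b - a + 1)
      (by omega) (by omega) hedge
    rw [hx0, hxlast] at hchain
    have hid : dist (c (vv a)) (c (vv b))
        = dist (c (vv a)) o + dist (c (vv b)) o - 2 * gromovProd o (c (vv a)) (c (vv b)) :=
      gromov_dist_eq o (c (vv a)) (c (vv b))
    have hua : dist (c (vv a)) o ≤ d - rr a + ε + 4 * δ := hcu (vv a)
    have hub : dist (c (vv b)) o ≤ d - rr b + ε + 4 * δ := hcu (vv b)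
    have hrba : rr b = rr a := hreq.symm
    rw [hrba] at hub
    linarith
  -- the combinatorial argument
  have comb : ∀ k : ℕ, ∀ s t : ℕ, s ≤ t → t ≤ m → t - s ≤ 2 ^ n - 1 →
      ((Finset.Icc s t).image (fun j => color (vv j))).card ≤ k → t + 2 ≤ s + 2 ^ k := by
    intro k
    induction k with
    | zero =>
      intro s t hst htm hwin hcard
      exfalso
      have hmem : color (vv s) ∈ (Finset.Icc s t).image (fun j => color (vv j)) :=
        Finset.mem_image_of_mem _ (Finset.mem_Icc.mpr ⟨le_refl s, hst⟩)
      have : (Finset.Icc s t).image (fun j => color (vv j)) = ∅ := Finset.card_eq_zero.mp (Nat.le_zero.mp hcard)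
      rw [this] at hmem
      exact absurd hmem (Finset.notMem_empty _)
    | succ k ih =>
      intro s t hst htm hwin hcard
      obtain ⟨j₀, hj₀mem, hj₀max⟩ :=
        Finset.exists_max_image (Finset.Icc s t) rr ⟨s, Finset.mem_Icc.mpr ⟨le_refl s, hst⟩⟩
      obtain ⟨hsj₀, hj₀t⟩ := Finset.mem_Icc.mp hj₀mem
      set i : Fin n := color (vv j₀) with hidef
      -- color i occurs only at j₀
      have huniq : ∀ j ∈ Finset.Icc s t, color (vv j) = i → j = j₀ := by
        intro j hjmem hji
        by_contra hne'
        obtain ⟨hsj, hjt⟩ := Finset.mem_Icc.mp hjmem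
        have hreq : rr j = rr j₀ := (hcol' j j₀ (by omega) (by omega) hne' hji).1
        rcases Nat.lt_or_ge j j₀ with hlt | hge
        · refine key j j₀ hlt (by omega) (by omega) hji ?_
          intro u hu1 hu2
          have := hj₀max u (Finset.mem_Icc.mpr ⟨by omega, by omega⟩)
          rw [hreq]
          exact this
        · have hlt : j₀ < j := by omega
          refine key j₀ j hlt (by omega) (by omega) hji.symm ?_
          intro u hu1 hu2
          exact hj₀max u (Finset.mem_Icc.mpr ⟨by omega, by omega⟩)
      have himem : i ∈ (Finset.Icc s t).image (fun j => color (vv j)) :=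
        Finset.mem_image_of_mem _ hj₀mem
      have h2k : 1 ≤ 2 ^ k := Nat.one_le_two_pow
      -- left part
      have hleft : j₀ + 1 ≤ s + 2 ^ k := by
        rcases Nat.lt_or_ge s j₀ with hsj | hsj
        · have hsub : (Finset.Icc s (j₀ - 1)).image (fun j => color (vv j)) ⊆
              ((Finset.Icc s t).image (fun j => color (vv j))).erase i := by
            intro z hz
            obtain ⟨j, hjmem, rfl⟩ := Finset.mem_image.mp hz
            obtain ⟨h1, h2⟩ := Finset.mem_Icc.mp hjmem
            refine Finset.mem_erase.mpr ⟨?_, Finset.mem_image_of_mem _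
              (Finset.mem_Icc.mpr ⟨h1, by omega⟩)⟩
            intro hcon
            have := huniq j (Finset.mem_Icc.mpr ⟨h1, by omega⟩) hcon
            omega
          have hcard' : ((Finset.Icc s (j₀ - 1)).image (fun j => color (vv j))).card ≤ k := by
            have h1 := Finset.card_le_card hsub
            have h2 := Finset.card_erase_of_mem himem
            omega
          have := ih s (j₀ - 1) (by omega) (by omega) (by omega) hcard'
          omega
        · omega
      -- right part
      have hright : t + 2 ≤ j₀ + 1 + 2 ^ k := by
        rcases Nat.lt_or_ge j₀ t with hjt' | hjt'
        · have hsub : (Finset.Icc (j₀ + 1) t).image (fun j => color (vv j)) ⊆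
              ((Finset.Icc s t).image (fun j => color (vv j))).erase i := by
            intro z hz
            obtain ⟨j, hjmem, rfl⟩ := Finset.mem_image.mp hz
            obtain ⟨h1, h2⟩ := Finset.mem_Icc.mp hjmem
            refine Finset.mem_erase.mpr ⟨?_, Finset.mem_image_of_mem _
              (Finset.mem_Icc.mpr ⟨by omega, h2⟩)⟩
            intro hcon
            have := huniq j (Finset.mem_Icc.mpr ⟨by omega, h2⟩) hcon
            omega
          have hcard' : ((Finset.Icc (j₀ + 1) t).image (fun j => color (vv j))).card ≤ k := by
            have h1 := Finset.card_le_card hsub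
            have h2 := Finset.card_erase_of_mem himem
            omega
          have := ih (j₀ + 1) t (by omega) htm (by omega) hcard'
          omega
        · omega
      have hps : 2 ^ (k + 1) = 2 ^ k * 2 := pow_succ 2 k
      omega
  -- conclude
  by_contra hcon
  push_neg at hcon
  rcases Nat.eq_zero_or_pos n with hn0 | hn1
  · subst hn0
    exact (color (vseq 0)).elim0
  · have h2n : 2 ≤ 2 ^ n := by
      calc 2 = 2 ^ 1 := (pow_one 2).symm
      _ ≤ 2 ^ n := Nat.pow_le_pow_right (by omega) hn1
    have hm : 2 ^ n - 1 ≤ m := by omega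
    have hcard : ((Finset.Icc 0 (2 ^ n - 1)).image (fun j => color (vv j))).card ≤ n := by
      have h1 := Finset.card_le_univ ((Finset.Icc 0 (2 ^ n - 1)).image (fun j => color (vv j)))
      simpa using h1
    have := comb n 0 (2 ^ n - 1) (by omega) hm (by omega) hcard
    omega
end
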